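/- Let K be a locally compact Hausdorff space, A ⊆ K a closed subset (so A is locally compact Hausdorff), and (x_j)_{j∈J} a family in C₀(K) which is a frame with bounds 0 < c₁ ≤ c₂ in the state sense: for every regular Borel probability measure μ on K and every x ∈ C₀(K), the family (∫_K |x·x_j|² dμ)_{j∈J} is summable and c₁·∫_K |x|² dμ ≤ Σ_{j∈J} ∫_K |x·x_j|² dμ ≤ c₂·∫_K |x|² dμ. Then the family of restrictions (x_j|_A)_{j∈J}, which lies in C₀(A), is a frame with the same bounds c₁, c₂ in the state sense in C₀(A): for every regular Borel probability measure ν on A and every y ∈ C₀(A), the family (∫_A |y·(x_j|_A)|² dν)_{j∈J} is summable and c₁·∫_A |y|² dν ≤ Σ_{j∈J} ∫_A |y·(x_j|_A)|² dν ≤ c₂·∫_A |y|² dν. -/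

import Mathlib

open ZeroAtInfty MeasureTheory

section Aux

open OnePoint Filter Topology Set

/-- Tietze extension for `C₀`: a function in `C₀(A, ℂ)` on a closed subset `A` of a locally
compact Hausdorff space `K` extends to a function in `C₀(K, ℂ)`. -/
lemma exists_c0_extension {K : Type*} [TopologicalSpace K] [LocallyCompactSpace K] [T2Space K]
    (A : Set K) (hA : IsClosed A) (y : C₀(A, ℂ)) :
    ∃ v : C₀(K, ℂ), ∀ a : A, v (a : K) = y a := by
  have hval : Continuous (Subtype.val : A → K) := continuous_subtype_val
  have hcc : Tendsto (Subtype.val : A → K) (coclosedCompact A) (coclosedCompact K) := by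
    rw [Filter.coclosedCompact_eq_cocompact, Filter.coclosedCompact_eq_cocompact]
    exact hA.isClosedEmbedding_subtypeVal.tendsto_cocompact
  have he : Continuous (OnePoint.map (Subtype.val : A → K)) :=
    OnePoint.continuous_map hval hcc
  have hinj : Function.Injective (OnePoint.map (Subtype.val : A → K)) :=
    Option.map_injective Subtype.val_injective
  have hce : Topology.IsClosedEmbedding (OnePoint.map (Subtype.val : A → K)) :=
    he.isClosedEmbedding hinj
  have hy0 : Tendsto (⇑y) (coclosedCompact A) (nhds 0) := by
    rw [Filter.coclosedCompact_eq_cocompact]; exact zero_at_infty y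
  set ytilde : C(OnePoint A, ℂ) := OnePoint.continuousMapMk y.toContinuousMap 0 hy0
  obtain ⟨g, hg⟩ := ytilde.exists_extension' hce
  refine ⟨⟨⟨fun k => g (k : OnePoint K), g.continuous.comp OnePoint.continuous_coe⟩, ?_⟩, ?_⟩
  · have h1 : Tendsto ((↑) : K → OnePoint K) (cocompact K) (nhds (∞ : OnePoint K)) := by
      rw [← Filter.coclosedCompact_eq_cocompact]; exact OnePoint.tendsto_coe_infty
    have h2 : g ∞ = 0 := by
      have := congrFun hg (∞ : OnePoint A)
      simpa [ytilde, OnePoint.continuousMapMk] using this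
    simpa [h2, Function.comp_def] using (g.continuous.tendsto (∞ : OnePoint K)).comp h1
  · intro a
    have := congrFun hg ((a : OnePoint A))
    simpa [ytilde, OnePoint.continuousMapMk] using this

/-- The pushforward along the inclusion of a closed subset of a regular finite measure is
regular. -/
lemma regular_map_subtype_val {K : Type*} [TopologicalSpace K] [T2Space K]
    [MeasurableSpace K] [BorelSpace K] (A : Set K) (hA : IsClosed A)
    (ν : Measure A) [IsFiniteMeasure ν] (hν : ν.Regular) :
    (ν.map (Subtype.val : A → K)).Regular := by
  have hmval : Measurable (Subtype.val : A → K) := measurable_subtype_coe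
  set μ := ν.map (Subtype.val : A → K) with hμ
  haveI : IsFiniteMeasure μ := by
    constructor
    rw [hμ, Measure.map_apply hmval MeasurableSet.univ]
    exact measure_lt_top ν _
  haveI : μ.OuterRegular := by
    constructor
    intro s hs r hr
    rw [Measure.map_apply hmval hs] at hr
    obtain ⟨U', hU'sub, hU'open, hU'⟩ :=
      Set.exists_isOpen_lt_of_lt _ r hr
    obtain ⟨V, hV, hVeq⟩ := isOpen_induced_iff.mp hU'open
    refine ⟨V ∪ Aᶜ, ?_, hV.union hA.isOpen_compl, ?_⟩
    · intro k hk
      by_cases hkA : k ∈ A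
      · left
        have : (⟨k, hkA⟩ : A) ∈ U' := hU'sub (by simpa using hk)
        rw [← hVeq] at this
        exact this
      · exact Or.inr hkA
    · rw [Measure.map_apply hmval ((hV.union hA.isOpen_compl).measurableSet)]
      have : (Subtype.val : A → K) ⁻¹' (V ∪ Aᶜ) = U' := by
        rw [← hVeq]
        ext a
        simp [a.2]
      rwa [this]
  constructor
  intro U hU r hr
  rw [Measure.map_apply hmval hU.measurableSet] at hr
  obtain ⟨L, hLsub, hLcomp, hL⟩ := hν.innerRegular (hU.preimage continuous_subtype_val) r hr
  refine ⟨Subtype.val '' L, ?_, hLcomp.image continuous_subtype_val, ?_⟩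
  · rintro k ⟨a, ha, rfl⟩
    exact hLsub ha
  · rw [Measure.map_apply hmval
      ((hLcomp.image continuous_subtype_val).isClosed.measurableSet)]
    rwa [Set.preimage_image_eq L Subtype.val_injective]

end Aux

/-- A family `(x j)` in `C₀(K, ℂ)` is a frame with bounds `0 < c₁ ≤ c₂` in the state sense:
for every regular Borel probability measure `μ` on `K` and every `v ∈ C₀(K)` the family
`(∫ ‖v · x j‖² dμ)` is summable and
`c₁ · ∫ ‖v‖² dμ ≤ ∑' j, ∫ ‖v · x j‖² dμ ≤ c₂ · ∫ ‖v‖² dμ`. -/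
def IsStateFrame {K : Type*} [TopologicalSpace K] [MeasurableSpace K] {J : Type*}
    (x : J → C₀(K, ℂ)) (c₁ c₂ : ℝ) : Prop :=
  ∀ μ : Measure K, IsProbabilityMeasure μ → μ.Regular →
    ∀ v : C₀(K, ℂ),
      Summable (fun j : J => ∫ t, ‖v t * x j t‖ ^ 2 ∂μ) ∧
      c₁ * (∫ t, ‖v t‖ ^ 2 ∂μ) ≤ (∑' j : J, ∫ t, ‖v t * x j t‖ ^ 2 ∂μ) ∧
      (∑' j : J, ∫ t, ‖v t * x j t‖ ^ 2 ∂μ) ≤ c₂ * ∫ t, ‖v t‖ ^ 2 ∂μ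

/-- If `(x j)` is a frame with bounds `0 < c₁ ≤ c₂` in the state sense in `C₀(K)` and
`A ⊆ K` is closed, then the family of restrictions `(x j |_A)` (any family in `C₀(A)`
agreeing pointwise with the `x j` on `A`) is a frame with the same bounds in `C₀(A)`. -/
theorem isStateFrame_restrict_closed
    (K : Type*) [TopologicalSpace K] [LocallyCompactSpace K] [T2Space K]
    [MeasurableSpace K] [BorelSpace K]
    (A : Set K) (hA : IsClosed A)
    {J : Type*} (x : J → C₀(K, ℂ)) (c₁ c₂ : ℝ) (hc₁ : 0 < c₁) (hc₁₂ : c₁ ≤ c₂)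
    (hx : IsStateFrame x c₁ c₂)
    (xr : J → C₀(A, ℂ)) (hxr : ∀ (j : J) (t : A), xr j t = x j (t : K)) :
    IsStateFrame xr c₁ c₂ := by
  intro ν hνprob hνreg y
  obtain ⟨v, hv⟩ := exists_c0_extension A hA y
  have hmval : Measurable (Subtype.val : A → K) := measurable_subtype_coe
  set μ := ν.map (Subtype.val : A → K) with hμ
  haveI : IsProbabilityMeasure μ := Measure.isProbabilityMeasure_map hmval.aemeasurable
  have hμreg : μ.Regular := regular_map_subtype_val A hA ν hνreg
  obtain ⟨hsum, hlow, hup⟩ := hx μ inferInstance hμreg v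
  have key : ∀ j : J, (∫ t, ‖v t * x j t‖ ^ 2 ∂μ) = ∫ a, ‖y a * xr j a‖ ^ 2 ∂ν := by
    intro j
    rw [hμ, integral_map hmval.aemeasurable (f := fun t => ‖v t * x j t‖ ^ 2)
      (((((map_continuous v).mul (map_continuous (x j))).norm).pow 2).aestronglyMeasurable)]
    exact integral_congr_ae (Filter.Eventually.of_forall fun a => by simp only [hv a, hxr j a])
  have key2 : (∫ t, ‖v t‖ ^ 2 ∂μ) = ∫ a, ‖y a‖ ^ 2 ∂ν := by
    rw [hμ, integral_map hmval.aemeasurable (f := fun t => ‖v t‖ ^ 2)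
      ((((map_continuous v).norm).pow 2).aestronglyMeasurable)]
    exact integral_congr_ae (Filter.Eventually.of_forall fun a => by simp only [hv a])
  have hfun : (fun j : J => ∫ a, ‖y a * xr j a‖ ^ 2 ∂ν)
      = fun j : J => ∫ t, ‖v t * x j t‖ ^ 2 ∂μ := funext fun j => (key j).symm
  refine ⟨?_, ?_, ?_⟩
  · rw [hfun]; exact hsum
  · rw [hfun, ← key2]; exact hlow
  · rw [hfun, ← key2]; exact hup
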